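/- If m > 6 and n > 7, then the walk (0,0) – (1,0) – (2,2e_{k-1}) – (1,2e_{k-1}) – (0,e_{k-1}) – (1,e_{k-1}) – (0,0) is a 6-cycle in B(k,m,n); consequently B(k,m,n) has girth 6. -/

import Mathlib

/-- The Bouwer relation: `(a,b)` is related to `(a+1,c)` when `c = b` or `c`
differs from `b` in exactly one coordinate `j`, where `c j = b j + 2 ^ a`
(the power of `2` computed in `ZMod n`). -/
def bouwerRel (k m n : ℕ) (u v : ZMod m × (Fin (k - 1) → ZMod n)) : Prop :=
  v.1 = u.1 + 1 ∧
    (v.2 = u.2 ∨ ∃ j : Fin (k - 1),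
      (∀ i : Fin (k - 1), i ≠ j → v.2 i = u.2 i) ∧ v.2 j = u.2 j + 2 ^ (u.1).val)

/-- The Bouwer graph `B(k,m,n)`, with vertex set `ZMod m × (ZMod n)^(k-1)`. -/
def bouwer (k m n : ℕ) : SimpleGraph (ZMod m × (Fin (k - 1) → ZMod n)) :=
  SimpleGraph.fromRel (bouwerRel k m n)



open SimpleGraph

lemma zmod_small_ne (m c : ℕ) (hc : 0 < c) (hcm : c < m) : ((c : ℕ) : ZMod m) ≠ 0 := by
  intro h
  rw [ZMod.natCast_eq_zero_iff] at h
  exact absurd (Nat.le_of_dvd hc h) (by omega)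

lemma two_unit {n m : ℕ} (h2 : (2 : ZMod n) ^ m = 1) (hm : 0 < m) : IsUnit (2 : ZMod n) := by
  refine IsUnit.of_mul_eq_one (a := (2 : ZMod n)) (2 ^ (m - 1)) ?_
  rw [← pow_succ', show m - 1 + 1 = m by omega, h2]

lemma pow_mod_eq {n m : ℕ} (h2 : (2 : ZMod n) ^ m = 1) (x : ℕ) :
    (2 : ZMod n) ^ (x % m) = 2 ^ x := by
  conv_rhs => rw [show x = m * (x / m) + x % m from (Nat.div_add_mod x m).symm]
  rw [pow_add, pow_mul, h2, one_pow, one_mul]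

lemma mul_pow_ne {n m : ℕ} (h2 : (2 : ZMod n) ^ m = 1) (hm : 0 < m) (hn : 7 < n)
    (c : ℕ) (hc : 0 < c) (hc5 : c < 8) (a : ℕ) :
    (c : ZMod n) * (2 : ZMod n) ^ a ≠ 0 := by
  intro h
  have hu : IsUnit ((2 : ZMod n) ^ a) := (two_unit h2 hm).pow a
  rw [hu.mul_left_eq_zero] at h
  exact zmod_small_ne n c hc (by omega) h

lemma pow_lvl {n m : ℕ} (hq : (2 : ZMod n) ^ m = 1) (hm : 6 < m) {a b : ZMod m}
    (hb : b = a + 1) : (2 : ZMod n) ^ b.val = 2 * 2 ^ a.val := by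
  haveI : NeZero m := ⟨by omega⟩
  haveI : Fact (1 < m) := ⟨by omega⟩
  subst hb
  rw [ZMod.val_add, ZMod.val_one, pow_mod_eq hq, pow_succ, mul_comm]

lemma rel_snd {k m n : ℕ} {u v : ZMod m × (Fin (k - 1) → ZMod n)}
    (r : bouwerRel k m n u v) :
    ∃ d : Fin (k - 1) → ZMod n, v.2 = u.2 + d ∧
      (d = 0 ∨ ∃ j, d = fun i => if i = j then (2 : ZMod n) ^ (u.1).val else 0) := by
  rcases r.2 with h | ⟨j, hji, hj⟩
  · exact ⟨0, by simp [h], Or.inl rfl⟩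
  · refine ⟨fun i => if i = j then 2 ^ (u.1).val else 0, ?_, Or.inr ⟨j, rfl⟩⟩
    funext i
    by_cases hij : i = j
    · subst hij; simpa using hj
    · simp [hij, hji i hij]

lemma ok_coord {K n : ℕ} {d : Fin K → ZMod n} {c : ZMod n}
    (o : d = 0 ∨ ∃ j, d = fun i => if i = j then c else 0) (i : Fin K) :
    d i = 0 ∨ d i = c := by
  rcases o with rfl | ⟨j, rfl⟩
  · exact Or.inl rfl
  · by_cases hij : i = j
    · right; simp [hij]
    · left; simp [hij]

lemma LD {K nn : ℕ} (α β : ZMod nn) (hα0 : α ≠ 0) (hαβ : α ≠ β) (hαβ' : α ≠ -β)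
    (x y z w : Fin K → ZMod nn)
    (hx : ∀ i, x i = 0 ∨ x i = α) (hy : ∀ i, y i = 0 ∨ y i = α)
    (hz : ∀ i, z i = 0 ∨ z i = β) (hw : ∀ i, w i = 0 ∨ w i = β)
    (hxy : x ≠ y) (heq : x - y = z - w) : False := by
  obtain ⟨i, hi⟩ := Function.ne_iff.mp hxy
  have h0 := congrFun heq i
  simp only [Pi.sub_apply] at h0
  rcases hx i with h1 | h1 <;> rcases hy i with h2 | h2 <;>
    rcases hz i with h3 | h3 <;> rcases hw i with h4 | h4 <;>
      rw [h1, h2, h3, h4] at h0 <;>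
      first
        | exact hi (h1.trans h2.symm)
        | exact hα0 (by linear_combination h0)
        | exact hα0 (by linear_combination -h0)
        | exact hαβ (by linear_combination h0)
        | exact hαβ (by linear_combination -h0)
        | exact hαβ' (by linear_combination h0)
        | exact hαβ' (by linear_combination -h0)

lemma P1_zero {K nn : ℕ} {c : ZMod nn} (hc0 : c ≠ 0) (hc2 : c + c ≠ 0)
    (jx jz : Fin K) (y : Fin K → ZMod nn)
    (oy : y = 0 ∨ ∃ j, y = fun i => if i = j then c else 0)
    (heq : y = (fun i => if i = jx then c else 0) + (fun i => if i = jz then c else 0))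
    (hyx : y ≠ fun i => if i = jx then c else 0)
    (hyz : y ≠ fun i => if i = jz then c else 0) : False := by
  rcases oy with rfl | ⟨jy, rfl⟩
  · have h0 := congrFun heq jx
    simp only [Pi.zero_apply, Pi.add_apply, if_true] at h0
    by_cases hxz : jx = jz
    · rw [if_pos hxz] at h0
      exact hc2 h0.symm
    · rw [if_neg hxz, add_zero] at h0
      exact hc0 h0.symm
  · by_cases hx : jx = jy
    · exact hyx (by rw [hx])
    · by_cases hz : jz = jy
      · exact hyz (by rw [hz])
      · have h0 := congrFun heq jy
        simp only [Pi.add_apply, if_true] at h0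
        rw [if_neg (fun h => hx h.symm), if_neg (fun h => hz h.symm), add_zero] at h0
        exact hc0 h0

lemma P1 {K nn : ℕ} (c : ZMod nn) (hc0 : c ≠ 0) (hc2 : c + c ≠ 0)
    (d1 d2 d3 d4 : Fin K → ZMod nn)
    (o1 : d1 = 0 ∨ ∃ j, d1 = fun i => if i = j then c else 0)
    (o2 : d2 = 0 ∨ ∃ j, d2 = fun i => if i = j then c else 0)
    (o3 : d3 = 0 ∨ ∃ j, d3 = fun i => if i = j then c else 0)
    (o4 : d4 = 0 ∨ ∃ j, d4 = fun i => if i = j then c else 0)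
    (heq : d1 + d3 = d2 + d4)
    (h12 : d1 ≠ d2) (h23 : d2 ≠ d3) (h34 : d3 ≠ d4) (h41 : d4 ≠ d1) : False := by
  rcases o1 with rfl | ⟨j1, rfl⟩
  · obtain ⟨j2, rfl⟩ := o2.resolve_left (fun h => h12 h.symm)
    obtain ⟨j4, rfl⟩ := o4.resolve_left (fun h => h41 h)
    exact P1_zero hc0 hc2 j2 j4 d3 o3 (by linear_combination heq) h23.symm h34
  · rcases o2 with rfl | ⟨j2, rfl⟩
    · obtain ⟨j3, rfl⟩ := o3.resolve_left (fun h => h23 h.symm)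
      exact P1_zero hc0 hc2 j3 j1 d4 o4 (by linear_combination -heq) h34.symm h41
    · rcases o3 with rfl | ⟨j3, rfl⟩
      · obtain ⟨j4, rfl⟩ := o4.resolve_left (fun h => h34 h.symm)
        exact P1_zero hc0 hc2 j2 j4 _ (Or.inr ⟨j1, rfl⟩) (by linear_combination heq)
          h12 h41.symm
      · rcases o4 with rfl | ⟨j4, rfl⟩
        · exact P1_zero hc0 hc2 j1 j3 _ (Or.inr ⟨j2, rfl⟩) (by linear_combination -heq)
            h12.symm h23
        · by_cases e12 : j1 = j2
          · exact h12 (by rw [e12])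
          · by_cases e41 : j4 = j1
            · exact h41 (by rw [e41])
            · have h0 := congrFun heq j1
              simp only [Pi.add_apply, if_true] at h0
              rw [if_neg e12, if_neg (show ¬(j1 = j4) from fun h => e41 h.symm), zero_add] at h0
              by_cases e13 : j1 = j3
              · rw [if_pos e13] at h0
                exact hc2 (by linear_combination h0)
              · rw [if_neg e13, add_zero] at h0
                exact hc0 (by linear_combination h0)

lemma zne1 {m : ℕ} (hm : 6 < m) : (1 : ZMod m) ≠ 0 := by
  have := zmod_small_ne m 1 (by omega) (by omega); simpa using this
lemma zne2 {m : ℕ} (hm : 6 < m) : (2 : ZMod m) ≠ 0 := by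
  have := zmod_small_ne m 2 (by omega) (by omega); simpa using this
lemma zne3 {m : ℕ} (hm : 6 < m) : (3 : ZMod m) ≠ 0 := by
  have := zmod_small_ne m 3 (by omega) (by omega); simpa using this
lemma zne4 {m : ℕ} (hm : 6 < m) : (4 : ZMod m) ≠ 0 := by
  have := zmod_small_ne m 4 (by omega) (by omega); simpa using this
lemma zne5 {m : ℕ} (hm : 6 < m) : (5 : ZMod m) ≠ 0 := by
  have := zmod_small_ne m 5 (by omega) (by omega); simpa using this

lemma no3 {k m n : ℕ} (hm : 6 < m) (hn : 7 < n) (hq : (2 : ZMod n) ^ m = 1)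
    {u0 u1 u2 : ZMod m × (Fin (k - 1) → ZMod n)}
    (e1 : (bouwer k m n).Adj u0 u1)
    (e2 : (bouwer k m n).Adj u1 u2)
    (e3 : (bouwer k m n).Adj u2 u0) : False := by
  simp only [bouwer, SimpleGraph.fromRel_adj] at e1 e2 e3
  obtain ⟨-, a1⟩ := e1
  obtain ⟨-, a2⟩ := e2
  obtain ⟨-, a3⟩ := e3
  rcases a1 with a1 | a1
  · -- +
    rcases a2 with a2 | a2
    · -- +
      rcases a3 with a3 | a3
      · -- +
        exact zne3 hm (by linear_combination - a1.1 - a2.1 - a3.1)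
      · -- -
        exact zne1 hm (by linear_combination - a1.1 - a2.1 + a3.1)
    · -- -
      rcases a3 with a3 | a3
      · -- +
        exact zne1 hm (by linear_combination - a1.1 + a2.1 - a3.1)
      · -- -
        exact zne1 hm (by linear_combination a1.1 - a2.1 - a3.1)
  · -- -
    rcases a2 with a2 | a2
    · -- +
      rcases a3 with a3 | a3
      · -- +
        exact zne1 hm (by linear_combination a1.1 - a2.1 - a3.1)
      · -- -
        exact zne1 hm (by linear_combination - a1.1 + a2.1 - a3.1)
    · -- -
      rcases a3 with a3 | a3
      · -- +
        exact zne1 hm (by linear_combination - a1.1 - a2.1 + a3.1)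
      · -- -
        exact zne3 hm (by linear_combination - a1.1 - a2.1 - a3.1)

lemma no4 {k m n : ℕ} (hm : 6 < m) (hn : 7 < n) (hq : (2 : ZMod n) ^ m = 1)
    {u0 u1 u2 u3 : ZMod m × (Fin (k - 1) → ZMod n)}
    (e1 : (bouwer k m n).Adj u0 u1)
    (e2 : (bouwer k m n).Adj u1 u2)
    (e3 : (bouwer k m n).Adj u2 u3)
    (e4 : (bouwer k m n).Adj u3 u0)
    (hne02 : u0 ≠ u2) (hne13 : u1 ≠ u3) : False := by
  simp only [bouwer, SimpleGraph.fromRel_adj] at e1 e2 e3 e4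
  obtain ⟨-, a1⟩ := e1
  obtain ⟨-, a2⟩ := e2
  obtain ⟨-, a3⟩ := e3
  obtain ⟨-, a4⟩ := e4
  rcases a1 with a1 | a1
  · -- +
    rcases a2 with a2 | a2
    · -- +
      rcases a3 with a3 | a3
      · -- +
        rcases a4 with a4 | a4
        · -- +
          exact zne4 hm (by linear_combination - a1.1 - a2.1 - a3.1 - a4.1)
        · -- -
          exact zne2 hm (by linear_combination - a1.1 - a2.1 - a3.1 + a4.1)
      · -- -
        rcases a4 with a4 | a4
        · -- +
          exact zne2 hm (by linear_combination - a1.1 - a2.1 + a3.1 - a4.1)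
        · -- -
          obtain ⟨d1, hd1, o1⟩ := rel_snd a1
          obtain ⟨d2, hd2, o2⟩ := rel_snd a2
          obtain ⟨d3, hd3, o3⟩ := rel_snd a3
          obtain ⟨d4, hd4, o4⟩ := rel_snd a4
          
          rw [pow_lvl hq hm a4.1] at o3
          rw [pow_lvl hq hm a1.1] at o2
          have lvl13 : u1.1 = u3.1 := a1.1.trans a4.1.symm
          have hb13 : u1.2 ≠ u3.2 := fun hb => hne13 (Prod.ext_iff.mpr ⟨lvl13, hb⟩)
          have hc0 : (2 : ZMod n) ^ (u0.1).val ≠ 0 := by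
            simpa using mul_pow_ne hq (by omega) hn 1 (by omega) (by omega) ((u0.1).val)
          have hc20 : 2 * (2 : ZMod n) ^ (u0.1).val ≠ 0 := by
            simpa using mul_pow_ne hq (by omega) hn 2 (by omega) (by omega) ((u0.1).val)
          have hc3 : (3 : ZMod n) * (2 : ZMod n) ^ (u0.1).val ≠ 0 := by
            simpa using mul_pow_ne hq (by omega) hn 3 (by omega) (by omega) ((u0.1).val)
          exact LD (2 * 2 ^ (u0.1).val) (2 ^ (u0.1).val) hc20
            (fun h => hc0 (by linear_combination h)) (fun h => hc3 (by linear_combination h))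
            d2 d3 d4 d1 (ok_coord o2) (ok_coord o3) (ok_coord o4) (ok_coord o1)
            (fun h => hb13 (by linear_combination -hd2 + hd3 - h))
            (by linear_combination -hd1 - hd2 + hd3 + hd4)
    · -- -
      rcases a3 with a3 | a3
      · -- +
        rcases a4 with a4 | a4
        · -- +
          exact zne2 hm (by linear_combination - a1.1 + a2.1 - a3.1 - a4.1)
        · -- -
          obtain ⟨d1, hd1, o1⟩ := rel_snd a1
          obtain ⟨d2, hd2, o2⟩ := rel_snd a2
          obtain ⟨d3, hd3, o3⟩ := rel_snd a3
          obtain ⟨d4, hd4, o4⟩ := rel_snd a4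
          
          have lvl02 : u0.1 = u2.1 := add_right_cancel (a1.1.symm.trans a2.1)
          rw [← lvl02] at o2 o3
          have lvl13 : u1.1 = u3.1 := a1.1.trans a4.1.symm
          have hb02 : u0.2 ≠ u2.2 := fun hb => hne02 (Prod.ext_iff.mpr ⟨lvl02, hb⟩)
          have hb13 : u1.2 ≠ u3.2 := fun hb => hne13 (Prod.ext_iff.mpr ⟨lvl13, hb⟩)
          have hc0 : (2 : ZMod n) ^ (u0.1).val ≠ 0 := by
            simpa using mul_pow_ne hq (by omega) hn 1 (by omega) (by omega) ((u0.1).val)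
          have hc20 : 2 * (2 : ZMod n) ^ (u0.1).val ≠ 0 := by
            simpa using mul_pow_ne hq (by omega) hn 2 (by omega) (by omega) ((u0.1).val)
          have hc3 : (3 : ZMod n) * (2 : ZMod n) ^ (u0.1).val ≠ 0 := by
            simpa using mul_pow_ne hq (by omega) hn 3 (by omega) (by omega) ((u0.1).val)
          exact P1 ((2 : ZMod n) ^ (u0.1).val) hc0 (fun h => hc20 (by linear_combination h))
            d1 d2 d3 d4 o1 o2 o3 o4
            (by linear_combination -hd1 + hd2 - hd3 + hd4)
            (fun h => hb02 (by linear_combination -hd1 + hd2 - h))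
            (fun h => hb13 (by linear_combination hd2 - hd3 + h))
            (fun h => hb02 (by linear_combination hd3 - hd4 + h))
            (fun h => hb13 (by linear_combination hd1 - hd4 - h))
      · -- -
        rcases a4 with a4 | a4
        · -- +
          obtain ⟨d1, hd1, o1⟩ := rel_snd a1
          obtain ⟨d2, hd2, o2⟩ := rel_snd a2
          obtain ⟨d3, hd3, o3⟩ := rel_snd a3
          obtain ⟨d4, hd4, o4⟩ := rel_snd a4
          
          have lvl02 : u0.1 = u2.1 := add_right_cancel (a1.1.symm.trans a2.1)
          rw [← lvl02] at o2
          rw [pow_lvl hq hm a4.1] at o1 o2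
          have hb02 : u0.2 ≠ u2.2 := fun hb => hne02 (Prod.ext_iff.mpr ⟨lvl02, hb⟩)
          have hc0 : (2 : ZMod n) ^ (u3.1).val ≠ 0 := by
            simpa using mul_pow_ne hq (by omega) hn 1 (by omega) (by omega) ((u3.1).val)
          have hc20 : 2 * (2 : ZMod n) ^ (u3.1).val ≠ 0 := by
            simpa using mul_pow_ne hq (by omega) hn 2 (by omega) (by omega) ((u3.1).val)
          have hc3 : (3 : ZMod n) * (2 : ZMod n) ^ (u3.1).val ≠ 0 := by
            simpa using mul_pow_ne hq (by omega) hn 3 (by omega) (by omega) ((u3.1).val)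
          exact LD (2 * 2 ^ (u3.1).val) (2 ^ (u3.1).val) hc20
            (fun h => hc0 (by linear_combination h)) (fun h => hc3 (by linear_combination h))
            d1 d2 d3 d4 (ok_coord o1) (ok_coord o2) (ok_coord o3) (ok_coord o4)
            (fun h => hb02 (by linear_combination -hd1 + hd2 - h))
            (by linear_combination -hd1 + hd2 + hd3 - hd4)
        · -- -
          exact zne2 hm (by linear_combination a1.1 - a2.1 - a3.1 - a4.1)
  · -- -
    rcases a2 with a2 | a2
    · -- +
      rcases a3 with a3 | a3
      · -- +
        rcases a4 with a4 | a4
        · -- +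
          exact zne2 hm (by linear_combination a1.1 - a2.1 - a3.1 - a4.1)
        · -- -
          obtain ⟨d1, hd1, o1⟩ := rel_snd a1
          obtain ⟨d2, hd2, o2⟩ := rel_snd a2
          obtain ⟨d3, hd3, o3⟩ := rel_snd a3
          obtain ⟨d4, hd4, o4⟩ := rel_snd a4
          
          have lvl02 : u0.1 = u2.1 := a1.1.trans a2.1.symm
          rw [← lvl02] at o3
          rw [pow_lvl hq hm a1.1] at o3 o4
          have hb02 : u0.2 ≠ u2.2 := fun hb => hne02 (Prod.ext_iff.mpr ⟨lvl02, hb⟩)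
          have hc0 : (2 : ZMod n) ^ (u1.1).val ≠ 0 := by
            simpa using mul_pow_ne hq (by omega) hn 1 (by omega) (by omega) ((u1.1).val)
          have hc20 : 2 * (2 : ZMod n) ^ (u1.1).val ≠ 0 := by
            simpa using mul_pow_ne hq (by omega) hn 2 (by omega) (by omega) ((u1.1).val)
          have hc3 : (3 : ZMod n) * (2 : ZMod n) ^ (u1.1).val ≠ 0 := by
            simpa using mul_pow_ne hq (by omega) hn 3 (by omega) (by omega) ((u1.1).val)
          exact LD (2 ^ (u1.1).val) (2 * 2 ^ (u1.1).val) hc0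
            (fun h => hc0 (by linear_combination -h)) (fun h => hc3 (by linear_combination h))
            d1 d2 d3 d4 (ok_coord o1) (ok_coord o2) (ok_coord o3) (ok_coord o4)
            (fun h => hb02 (by linear_combination hd1 - hd2 + h))
            (by linear_combination hd3 - hd4 - hd1 + hd2)
      · -- -
        rcases a4 with a4 | a4
        · -- +
          obtain ⟨d1, hd1, o1⟩ := rel_snd a1
          obtain ⟨d2, hd2, o2⟩ := rel_snd a2
          obtain ⟨d3, hd3, o3⟩ := rel_snd a3
          obtain ⟨d4, hd4, o4⟩ := rel_snd a4
          
          have lvl13 : u1.1 = u3.1 := add_right_cancel (a2.1.symm.trans a3.1)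
          rw [← lvl13] at o3 o4
          have lvl02 : u0.1 = u2.1 := a1.1.trans a2.1.symm
          have hb02 : u0.2 ≠ u2.2 := fun hb => hne02 (Prod.ext_iff.mpr ⟨lvl02, hb⟩)
          have hb13 : u1.2 ≠ u3.2 := fun hb => hne13 (Prod.ext_iff.mpr ⟨lvl13, hb⟩)
          have hc0 : (2 : ZMod n) ^ (u1.1).val ≠ 0 := by
            simpa using mul_pow_ne hq (by omega) hn 1 (by omega) (by omega) ((u1.1).val)
          have hc20 : 2 * (2 : ZMod n) ^ (u1.1).val ≠ 0 := by
            simpa using mul_pow_ne hq (by omega) hn 2 (by omega) (by omega) ((u1.1).val)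
          have hc3 : (3 : ZMod n) * (2 : ZMod n) ^ (u1.1).val ≠ 0 := by
            simpa using mul_pow_ne hq (by omega) hn 3 (by omega) (by omega) ((u1.1).val)
          exact P1 ((2 : ZMod n) ^ (u1.1).val) hc0 (fun h => hc20 (by linear_combination h))
            d1 d2 d3 d4 o1 o2 o3 o4
            (by linear_combination -hd1 + hd2 + hd4 - hd3)
            (fun h => hb02 (by linear_combination hd1 - hd2 + h))
            (fun h => hb13 (by linear_combination -hd2 + hd3 - h))
            (fun h => hb02 (by linear_combination -hd3 + hd4 - h))
            (fun h => hb13 (by linear_combination -hd1 + hd4 + h))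
        · -- -
          exact zne2 hm (by linear_combination - a1.1 + a2.1 - a3.1 - a4.1)
    · -- -
      rcases a3 with a3 | a3
      · -- +
        rcases a4 with a4 | a4
        · -- +
          obtain ⟨d1, hd1, o1⟩ := rel_snd a1
          obtain ⟨d2, hd2, o2⟩ := rel_snd a2
          obtain ⟨d3, hd3, o3⟩ := rel_snd a3
          obtain ⟨d4, hd4, o4⟩ := rel_snd a4
          
          have lvl13 : u1.1 = u3.1 := add_right_cancel (a1.1.symm.trans a4.1)
          rw [← lvl13] at o4
          rw [pow_lvl hq hm a2.1] at o1 o4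
          have hb13 : u1.2 ≠ u3.2 := fun hb => hne13 (Prod.ext_iff.mpr ⟨lvl13, hb⟩)
          have hc0 : (2 : ZMod n) ^ (u2.1).val ≠ 0 := by
            simpa using mul_pow_ne hq (by omega) hn 1 (by omega) (by omega) ((u2.1).val)
          have hc20 : 2 * (2 : ZMod n) ^ (u2.1).val ≠ 0 := by
            simpa using mul_pow_ne hq (by omega) hn 2 (by omega) (by omega) ((u2.1).val)
          have hc3 : (3 : ZMod n) * (2 : ZMod n) ^ (u2.1).val ≠ 0 := by
            simpa using mul_pow_ne hq (by omega) hn 3 (by omega) (by omega) ((u2.1).val)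
          exact LD (2 * 2 ^ (u2.1).val) (2 ^ (u2.1).val) hc20
            (fun h => hc0 (by linear_combination h)) (fun h => hc3 (by linear_combination h))
            d1 d4 d3 d2 (ok_coord o1) (ok_coord o4) (ok_coord o3) (ok_coord o2)
            (fun h => hb13 (by linear_combination hd4 - hd1 - h))
            (by linear_combination -hd1 - hd2 + hd3 + hd4)
        · -- -
          exact zne2 hm (by linear_combination - a1.1 - a2.1 + a3.1 - a4.1)
      · -- -
        rcases a4 with a4 | a4
        · -- +
          exact zne2 hm (by linear_combination - a1.1 - a2.1 - a3.1 + a4.1)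
        · -- -
          exact zne4 hm (by linear_combination - a1.1 - a2.1 - a3.1 - a4.1)

lemma no5 {k m n : ℕ} (hm : 6 < m) (hn : 7 < n) (hq : (2 : ZMod n) ^ m = 1)
    {u0 u1 u2 u3 u4 : ZMod m × (Fin (k - 1) → ZMod n)}
    (e1 : (bouwer k m n).Adj u0 u1)
    (e2 : (bouwer k m n).Adj u1 u2)
    (e3 : (bouwer k m n).Adj u2 u3)
    (e4 : (bouwer k m n).Adj u3 u4)
    (e5 : (bouwer k m n).Adj u4 u0) : False := by
  simp only [bouwer, SimpleGraph.fromRel_adj] at e1 e2 e3 e4 e5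
  obtain ⟨-, a1⟩ := e1
  obtain ⟨-, a2⟩ := e2
  obtain ⟨-, a3⟩ := e3
  obtain ⟨-, a4⟩ := e4
  obtain ⟨-, a5⟩ := e5
  rcases a1 with a1 | a1
  · -- +
    rcases a2 with a2 | a2
    · -- +
      rcases a3 with a3 | a3
      · -- +
        rcases a4 with a4 | a4
        · -- +
          rcases a5 with a5 | a5
          · -- +
            exact zne5 hm (by linear_combination - a1.1 - a2.1 - a3.1 - a4.1 - a5.1)
          · -- -
            exact zne3 hm (by linear_combination - a1.1 - a2.1 - a3.1 - a4.1 + a5.1)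
        · -- -
          rcases a5 with a5 | a5
          · -- +
            exact zne3 hm (by linear_combination - a1.1 - a2.1 - a3.1 + a4.1 - a5.1)
          · -- -
            exact zne1 hm (by linear_combination - a1.1 - a2.1 - a3.1 + a4.1 + a5.1)
      · -- -
        rcases a4 with a4 | a4
        · -- +
          rcases a5 with a5 | a5
          · -- +
            exact zne3 hm (by linear_combination - a1.1 - a2.1 + a3.1 - a4.1 - a5.1)
          · -- -
            exact zne1 hm (by linear_combination - a1.1 - a2.1 + a3.1 - a4.1 + a5.1)
        · -- -
          rcases a5 with a5 | a5
          · -- +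
            exact zne1 hm (by linear_combination - a1.1 - a2.1 + a3.1 + a4.1 - a5.1)
          · -- -
            exact zne1 hm (by linear_combination a1.1 + a2.1 - a3.1 - a4.1 - a5.1)
    · -- -
      rcases a3 with a3 | a3
      · -- +
        rcases a4 with a4 | a4
        · -- +
          rcases a5 with a5 | a5
          · -- +
            exact zne3 hm (by linear_combination - a1.1 + a2.1 - a3.1 - a4.1 - a5.1)
          · -- -
            exact zne1 hm (by linear_combination - a1.1 + a2.1 - a3.1 - a4.1 + a5.1)
        · -- -
          rcases a5 with a5 | a5
          · -- +
            exact zne1 hm (by linear_combination - a1.1 + a2.1 - a3.1 + a4.1 - a5.1)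
          · -- -
            exact zne1 hm (by linear_combination a1.1 - a2.1 + a3.1 - a4.1 - a5.1)
      · -- -
        rcases a4 with a4 | a4
        · -- +
          rcases a5 with a5 | a5
          · -- +
            exact zne1 hm (by linear_combination - a1.1 + a2.1 + a3.1 - a4.1 - a5.1)
          · -- -
            exact zne1 hm (by linear_combination a1.1 - a2.1 - a3.1 + a4.1 - a5.1)
        · -- -
          rcases a5 with a5 | a5
          · -- +
            exact zne1 hm (by linear_combination a1.1 - a2.1 - a3.1 - a4.1 + a5.1)
          · -- -
            exact zne3 hm (by linear_combination a1.1 - a2.1 - a3.1 - a4.1 - a5.1)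
  · -- -
    rcases a2 with a2 | a2
    · -- +
      rcases a3 with a3 | a3
      · -- +
        rcases a4 with a4 | a4
        · -- +
          rcases a5 with a5 | a5
          · -- +
            exact zne3 hm (by linear_combination a1.1 - a2.1 - a3.1 - a4.1 - a5.1)
          · -- -
            exact zne1 hm (by linear_combination a1.1 - a2.1 - a3.1 - a4.1 + a5.1)
        · -- -
          rcases a5 with a5 | a5
          · -- +
            exact zne1 hm (by linear_combination a1.1 - a2.1 - a3.1 + a4.1 - a5.1)
          · -- -
            exact zne1 hm (by linear_combination - a1.1 + a2.1 + a3.1 - a4.1 - a5.1)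
      · -- -
        rcases a4 with a4 | a4
        · -- +
          rcases a5 with a5 | a5
          · -- +
            exact zne1 hm (by linear_combination a1.1 - a2.1 + a3.1 - a4.1 - a5.1)
          · -- -
            exact zne1 hm (by linear_combination - a1.1 + a2.1 - a3.1 + a4.1 - a5.1)
        · -- -
          rcases a5 with a5 | a5
          · -- +
            exact zne1 hm (by linear_combination - a1.1 + a2.1 - a3.1 - a4.1 + a5.1)
          · -- -
            exact zne3 hm (by linear_combination - a1.1 + a2.1 - a3.1 - a4.1 - a5.1)
    · -- -
      rcases a3 with a3 | a3
      · -- +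
        rcases a4 with a4 | a4
        · -- +
          rcases a5 with a5 | a5
          · -- +
            exact zne1 hm (by linear_combination a1.1 + a2.1 - a3.1 - a4.1 - a5.1)
          · -- -
            exact zne1 hm (by linear_combination - a1.1 - a2.1 + a3.1 + a4.1 - a5.1)
        · -- -
          rcases a5 with a5 | a5
          · -- +
            exact zne1 hm (by linear_combination - a1.1 - a2.1 + a3.1 - a4.1 + a5.1)
          · -- -
            exact zne3 hm (by linear_combination - a1.1 - a2.1 + a3.1 - a4.1 - a5.1)
      · -- -
        rcases a4 with a4 | a4
        · -- +
          rcases a5 with a5 | a5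
          · -- +
            exact zne1 hm (by linear_combination - a1.1 - a2.1 - a3.1 + a4.1 + a5.1)
          · -- -
            exact zne3 hm (by linear_combination - a1.1 - a2.1 - a3.1 + a4.1 - a5.1)
        · -- -
          rcases a5 with a5 | a5
          · -- +
            exact zne3 hm (by linear_combination - a1.1 - a2.1 - a3.1 - a4.1 + a5.1)
          · -- -
            exact zne5 hm (by linear_combination - a1.1 - a2.1 - a3.1 - a4.1 - a5.1)


lemma no_short (k m n : ℕ) (hm : 6 < m) (hn : 7 < n) (hq : (2 : ZMod n) ^ m = 1)
    (v : ZMod m × (Fin (k - 1) → ZMod n)) (w : (bouwer k m n).Walk v v)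
    (hc : w.IsCycle) : 6 ≤ w.length := by
  by_contra hlen
  push_neg at hlen
  have h3l := hc.three_le_length
  cases w with
  | nil => simp at h3l
  | cons h1 q1 =>
    cases q1 with
    | nil => simp at h3l
    | cons h2 q2 =>
      cases q2 with
      | nil => simp [SimpleGraph.Walk.length_cons] at h3l
      | cons h3 q3 =>
        cases q3 with
        | nil => exact no3 hm hn hq h1 h2 h3
        | cons h4 q4 =>
          cases q4 with
          | nil =>
            have hnd := hc.support_nodup
            simp [SimpleGraph.Walk.support_cons] at hnd
            exact no4 hm hn hq h1 h2 h3 h4 (fun h => hnd.2.1.2 h.symm) hnd.1.2.1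
          | cons h5 q5 =>
            cases q5 with
            | nil => exact no5 hm hn hq h1 h2 h3 h4 h5
            | cons h6 q6 =>
              simp [SimpleGraph.Walk.length_cons] at hlen
              omega

lemma zmod_cast_ne {m : ℕ} (a b : ℕ) (ha : a < m) (hb : b < m) (hab : a ≠ b) :
    ((a : ℕ) : ZMod m) ≠ ((b : ℕ) : ZMod m) := by
  intro h
  apply hab
  have := congrArg ZMod.val h
  rwa [ZMod.val_cast_of_lt ha, ZMod.val_cast_of_lt hb] at this

lemma six_cycle (k m n : ℕ) (hk : 1 < k) (hm : 6 < m) (hn : 7 < n)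
    (h2 : (2 : ZMod n) ^ m = 1)
    (e : Fin (k - 1) → ZMod n) (he : e = fun i => if i.val = k - 2 then 1 else 0) :
    (∃ c : (bouwer k m n).Walk ((0 : ZMod m), (0 : Fin (k - 1) → ZMod n)) (0, 0),
      c.IsCycle ∧
      c.support = [(0, 0), (1, 0), (2, fun i => 2 * e i), (1, fun i => 2 * e i),
        (0, e), (1, e), (0, 0)]) := by
  have hv1 : (1 : ZMod m).val = 1 := by
    have : ((1:ℕ) : ZMod m).val = 1 := ZMod.val_cast_of_lt (by omega)
    simpa using this
  have hv0 : (0 : ZMod m).val = 0 := by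
    have : ((0:ℕ) : ZMod m).val = 0 := ZMod.val_cast_of_lt (by omega)
    simpa using this
  have zm01 : (0 : ZMod m) ≠ 1 := by
    have := zmod_cast_ne (m := m) 0 1 (by omega) (by omega) (by omega); simpa using this
  have zm02 : (0 : ZMod m) ≠ 2 := by
    have := zmod_cast_ne (m := m) 0 2 (by omega) (by omega) (by omega); simpa using this
  have zm12 : (1 : ZMod m) ≠ 2 := by
    have := zmod_cast_ne (m := m) 1 2 (by omega) (by omega) (by omega); simpa using this
  have zn01 : (0 : ZMod n) ≠ 1 := by
    have := zmod_cast_ne (m := n) 0 1 (by omega) (by omega) (by omega); simpa using this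
  have zn02 : (0 : ZMod n) ≠ 2 := by
    have := zmod_cast_ne (m := n) 0 2 (by omega) (by omega) (by omega); simpa using this
  have zn12 : (1 : ZMod n) ≠ 2 := by
    have := zmod_cast_ne (m := n) 1 2 (by omega) (by omega) (by omega); simpa using this
  set j0 : Fin (k - 1) := ⟨k - 2, by omega⟩ with hj0
  have hej0 : e j0 = 1 := by rw [he]; simp [hj0]
  have hei : ∀ i, i ≠ j0 → e i = 0 := by
    intro i hi
    rw [he]
    simp only []
    rw [if_neg]
    exact fun h => hi (Fin.ext h)
  -- vertices
  set G := bouwer k m n with hG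
  have hadj : ∀ u v : ZMod m × (Fin (k - 1) → ZMod n),
      u ≠ v → (bouwerRel k m n u v ∨ bouwerRel k m n v u) → G.Adj u v := by
    intro u v h hr
    exact (SimpleGraph.fromRel_adj _ _ _).mpr ⟨h, hr⟩
  have E1 : G.Adj (0, 0) (1, 0) :=
    hadj _ _ (fun h => zm01 (congrArg Prod.fst h)) (Or.inl ⟨(zero_add 1).symm, Or.inl rfl⟩)
  have E2 : G.Adj (1, 0) (2, fun i => 2 * e i) := by
    refine hadj _ _ (fun h => zm12 (congrArg Prod.fst h)) (Or.inl ⟨one_add_one_eq_two.symm, Or.inr ⟨j0, ?_, ?_⟩⟩)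
    · intro i hi
      show 2 * e i = 0
      rw [hei i hi, mul_zero]
    · show 2 * e j0 = 0 + 2 ^ (1 : ZMod m).val
      rw [hej0, hv1, zero_add, pow_one, mul_one]
  have E3 : G.Adj (2, fun i => 2 * e i) (1, fun i => 2 * e i) :=
    hadj _ _ (fun h => zm12 (congrArg Prod.fst h).symm)
      (Or.inr ⟨one_add_one_eq_two.symm, Or.inl rfl⟩)
  have E4 : G.Adj (1, fun i => 2 * e i) (0, e) := by
    refine hadj _ _ (fun h => zm01 (congrArg Prod.fst h).symm)
      (Or.inr ⟨(zero_add 1).symm, Or.inr ⟨j0, ?_, ?_⟩⟩)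
    · intro i hi
      show 2 * e i = e i
      rw [hei i hi, mul_zero]
    · show 2 * e j0 = e j0 + 2 ^ (0 : ZMod m).val
      rw [hej0, hv0, pow_zero, mul_one]
      exact one_add_one_eq_two.symm
  have E5 : G.Adj (0, e) (1, e) :=
    hadj _ _ (fun h => zm01 (congrArg Prod.fst h)) (Or.inl ⟨(zero_add 1).symm, Or.inl rfl⟩)
  have E6 : G.Adj (1, e) (0, 0) := by
    refine hadj _ _ (fun h => zm01 (congrArg Prod.fst h).symm)
      (Or.inr ⟨(zero_add 1).symm, Or.inr ⟨j0, ?_, ?_⟩⟩)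
    · intro i hi
      exact hei i hi
    · show e j0 = 0 + 2 ^ (0 : ZMod m).val
      rw [hej0, hv0, pow_zero, zero_add]
  refine ⟨Walk.cons E1 (Walk.cons E2 (Walk.cons E3 (Walk.cons E4 (Walk.cons E5
    (Walk.cons E6 Walk.nil))))), ?_, by simp⟩
  -- distinctness of second coords
  have d0e : (0 : Fin (k-1) → ZMod n) ≠ e := by
    intro h
    exact zn01 (by simpa [hej0] using congrFun h j0)
  have d02e : (0 : Fin (k-1) → ZMod n) ≠ fun i => 2 * e i := by
    intro h
    exact zn02 (by simpa [hej0] using congrFun h j0)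
  have de2e : e ≠ fun i => 2 * e i := by
    intro h
    exact zn12 (by simpa [hej0] using congrFun h j0)
  rw [Walk.cons_isCycle_iff]
  refine ⟨?_, ?_⟩
  · simp [Walk.cons_isPath_iff, Prod.ext_iff, zm01, zm02, zm12, zm01.symm, zm02.symm,
      zm12.symm, d0e, d02e, de2e, d0e.symm, d02e.symm, de2e.symm]
  · simp [Walk.edges_cons, Sym2.eq, Sym2.rel_iff, Prod.ext_iff, zm01, zm02, zm12, zm01.symm,
      zm02.symm, zm12.symm, d0e, d02e, de2e, d0e.symm, d02e.symm, de2e.symm]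

/-- If `m > 6` and `n > 7`, then the walk
`(0,0) – (1,0) – (2,2e) – (1,2e) – (0,e) – (1,e) – (0,0)`, where `e = e_{k-1}`
is the last standard basis vector of `(ZMod n)^(k-1)`, is a 6-cycle in
`B(k,m,n)`; consequently `B(k,m,n)` has girth `6`. -/
theorem bouwer_girth (k m n : ℕ) (hk : 1 < k) (hm : 6 < m) (hn : 7 < n)
    (h2 : (2 : ZMod n) ^ m = 1)
    (e : Fin (k - 1) → ZMod n) (he : e = fun i => if i.val = k - 2 then 1 else 0) :
    (∃ c : (bouwer k m n).Walk ((0 : ZMod m), (0 : Fin (k - 1) → ZMod n)) (0, 0),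
      c.IsCycle ∧
      c.support = [(0, 0), (1, 0), (2, fun i => 2 * e i), (1, fun i => 2 * e i),
        (0, e), (1, e), (0, 0)]) ∧
    (bouwer k m n).girth = 6 := by
  obtain ⟨c, hcyc, hsup⟩ := six_cycle k m n hk hm hn h2 e he
  refine ⟨⟨c, hcyc, hsup⟩, ?_⟩
  have hlen : c.length = 6 := by
    have := congrArg List.length hsup
    rw [SimpleGraph.Walk.length_support] at this
    simpa using this
  have hle : (bouwer k m n).egirth ≤ 6 := by
    rw [SimpleGraph.egirth]
    refine le_trans (iInf_le _ ((0 : ZMod m), (0 : Fin (k - 1) → ZMod n))) ?_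
    refine le_trans (iInf_le _ c) ?_
    refine le_trans (iInf_le _ hcyc) ?_
    rw [hlen]
    simp
  have hge : (6 : ℕ∞) ≤ (bouwer k m n).egirth := by
    rw [SimpleGraph.le_egirth]
    intro a w hw
    exact_mod_cast no_short k m n hm hn h2 a w hw
  have hg : (bouwer k m n).egirth = 6 := le_antisymm hle hge
  rw [SimpleGraph.girth, hg]
  rfl
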